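/- arXiv:2002.12435 — 5 statements merged into one kernel-verified Lean document; each statement's English description precedes it below -/
import Mathlib

section
/- Let P and P̃ be transition matrices of two finite-state Markov chains on state space S, each having a stationary distribution P^∞ and P̃^∞ respectively, and suppose the matrix (I - P + 𝟙·(P^∞)^T) is invertible. Then P̃^∞ - P^∞ = P̃^∞ (P̃ - P)(I - P + 𝟙·(P^∞)^T)^{-1}, where stationary distributions are viewed as row vectors and 𝟙 is the all-ones column vector. -/
open Matrix BigOperators

/-- Perturbation identity for stationary distributions of finite Markov chains
(Schweitzer).  `P` and `Pt` are row-stochastic matrices on the finite state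
space `S`, with stationary distributions `pinf` and `ptinf` (row vectors).
If the fundamental matrix `I - P + 𝟙·(pinf)^T` is invertible, then
`ptinf - pinf = ptinf ⬝ (Pt - P) ⬝ (I - P + 𝟙·(pinf)^T)⁻¹`. -/
theorem stationary_perturbation
    {S : Type*} [Fintype S] [DecidableEq S]
    (P Pt : Matrix S S ℝ)
    (hP_nonneg : ∀ i j, 0 ≤ P i j) (hP_row : ∀ i, ∑ j, P i j = 1)
    (hPt_nonneg : ∀ i j, 0 ≤ Pt i j) (hPt_row : ∀ i, ∑ j, Pt i j = 1)
    (pinf ptinf : S → ℝ)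
    (hpinf_nonneg : ∀ j, 0 ≤ pinf j) (hpinf_sum : ∑ j, pinf j = 1)
    (hptinf_nonneg : ∀ j, 0 ≤ ptinf j) (hptinf_sum : ∑ j, ptinf j = 1)
    (hpinf_stat : Matrix.vecMul pinf P = pinf)
    (hptinf_stat : Matrix.vecMul ptinf Pt = ptinf)
    (hinv : IsUnit (1 - P + Matrix.of (fun _ j => pinf j) : Matrix S S ℝ).det) :
    ptinf - pinf =
      Matrix.vecMul (Matrix.vecMul ptinf (Pt - P))
        (1 - P + Matrix.of (fun _ j => pinf j) : Matrix S S ℝ)⁻¹ := by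
  set A : Matrix S S ℝ := 1 - P + Matrix.of (fun _ j => pinf j) with hA
  have hones : ∀ (x : S → ℝ), Matrix.vecMul x (Matrix.of (fun _ j => pinf j) : Matrix S S ℝ)
      = fun j => (∑ i, x i) * pinf j := by
    intro x
    funext j
    simp [Matrix.vecMul, dotProduct, Finset.sum_mul]
  have key : Matrix.vecMul (ptinf - pinf) A = Matrix.vecMul ptinf (Pt - P) := by
    rw [hA, Matrix.vecMul_add, Matrix.vecMul_sub, Matrix.vecMul_one,
      Matrix.sub_vecMul, Matrix.sub_vecMul, hones, hpinf_stat,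
      Matrix.vecMul_sub, hptinf_stat]
    funext j
    simp [hones, hpinf_sum, hptinf_sum, Matrix.sub_apply]
  rw [← key, Matrix.vecMul_vecMul, Matrix.mul_nonsing_inv _ hinv, Matrix.vecMul_one]
end

section
/- Let P be the transition matrix of a finite-state Markov chain satisfying the Doeblin condition: every entry of P^{t₀} is at least ρ > 0. Let r : S → ℝ be a reward function and let r̄ = Σ_s P^∞(s) r(s) be the stationary average reward. Then the limit of (1/T) Σ_{t=1}^T Σ_x P^t(s,x) r(x) as T → ∞ exists, equals r̄, and is independent of the initial state s. -/
open Matrix BigOperators Filter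

/-- Under the Doeblin condition, the Cesàro averages of expected rewards
`(1/T) ∑_{t=1}^T ∑_x P^t(s,x) r(x)` converge, for every initial state `s`,
to the stationary average reward `r̄ = ∑_s pinf(s) r(s)`; in particular the
limit is independent of the initial state. -/
theorem doeblin_average_reward_limit
    {S : Type*} [Fintype S] [DecidableEq S]
    (P : Matrix S S ℝ)
    (hP_nonneg : ∀ i j, 0 ≤ P i j) (hP_row : ∀ i, ∑ j, P i j = 1)
    (t₀ : ℕ) (ρ : ℝ) (hρ : 0 < ρ) (ht₀ : 0 < t₀)
    (hDoeblin : ∀ i j, ρ ≤ (P ^ t₀) i j)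
    (pinf : S → ℝ)
    (hpinf_nonneg : ∀ j, 0 ≤ pinf j) (hpinf_sum : ∑ j, pinf j = 1)
    (hpinf_stat : Matrix.vecMul pinf P = pinf)
    (r : S → ℝ) :
    ∀ s : S,
      Tendsto
        (fun T : ℕ => (1 / (T : ℝ)) * ∑ t ∈ Finset.Icc 1 T, ∑ x, (P ^ t) s x * r x)
        atTop (nhds (∑ x, pinf x * r x)) := by
  intro s
  -- rows of powers sum to 1
  have hrow : ∀ (n : ℕ) (i : S), ∑ j, (P ^ n) i j = 1 := by
    intro n
    induction n with
    | zero => intro i; simp [Matrix.one_apply]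
    | succ n ih =>
      intro i
      rw [pow_succ]
      calc ∑ j, (P ^ n * P) i j = ∑ j, ∑ k, (P ^ n) i k * P k j := by
            simp [Matrix.mul_apply]
        _ = ∑ k, ∑ j, (P ^ n) i k * P k j := Finset.sum_comm
        _ = ∑ k, (P ^ n) i k * ∑ j, P k j := by simp [Finset.mul_sum]
        _ = 1 := by simp [hP_row, ih]
  have hpow_nonneg : ∀ (n : ℕ) (i j : S), 0 ≤ (P ^ n) i j := by
    intro n
    induction n with
    | zero => intro i j; rw [pow_zero, Matrix.one_apply]; positivity
    | succ n ih =>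
      intro i j
      rw [pow_succ, Matrix.mul_apply]
      exact Finset.sum_nonneg fun k _ => mul_nonneg (ih i k) (hP_nonneg k j)
  -- stationarity for powers
  have hstat : ∀ (n : ℕ) (x : S), ∑ y, pinf y * (P ^ n) y x = pinf x := by
    intro n
    induction n with
    | zero => intro x; simp [Matrix.one_apply, Finset.mul_sum]
    | succ n ih =>
      intro x
      have h1 : ∀ y, (P ^ (n+1)) y x = ∑ k, (P ^ n) y k * P k x := by
        intro y; rw [pow_succ, Matrix.mul_apply]
      calc ∑ y, pinf y * (P ^ (n+1)) y x
          = ∑ y, ∑ k, pinf y * ((P ^ n) y k * P k x) := by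
            simp only [h1, Finset.mul_sum]
        _ = ∑ k, (∑ y, pinf y * (P ^ n) y k) * P k x := by
            rw [Finset.sum_comm]; simp [Finset.sum_mul, mul_assoc]
        _ = ∑ k, pinf k * P k x := by simp [ih]
        _ = pinf x := by
            have := congrFun hpinf_stat x
            simpa [Matrix.vecMul, dotProduct] using this
  set v : ℕ → S → ℝ := fun t x => (P ^ t) s x - pinf x with hv
  set N : ℕ → ℝ := fun t => ∑ x, |v t x| with hN
  have hNnonneg : ∀ t, 0 ≤ N t := fun t => Finset.sum_nonneg fun x _ => abs_nonneg _
  -- evolution of v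
  have hvstep : ∀ t n x, v (t + n) x = ∑ y, v t y * (P ^ n) y x := by
    intro t n x
    have : (P ^ (t + n)) s x = ∑ y, (P ^ t) s y * (P ^ n) y x := by
      rw [pow_add, Matrix.mul_apply]
    simp only [hv, this, sub_mul, Finset.sum_sub_distrib, hstat n x]
  -- sum of v is zero
  have hvsum : ∀ t, ∑ x, v t x = 0 := by
    intro t
    simp [hv, Finset.sum_sub_distrib, hrow, hpinf_sum]
  -- N is nonincreasing in steps of 1
  have hNstep : ∀ t, N (t + 1) ≤ N t := by
    intro t
    calc N (t + 1) = ∑ x, |∑ y, v t y * (P ^ 1) y x| := by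
          simp only [hN, hvstep t 1]
      _ ≤ ∑ x, ∑ y, |v t y| * P y x := by
          apply Finset.sum_le_sum
          intro x _
          refine (Finset.abs_sum_le_sum_abs _ _).trans ?_
          apply Finset.sum_le_sum
          intro y _
          rw [pow_one, abs_mul, abs_of_nonneg (hP_nonneg y x)]
      _ = ∑ y, |v t y| * ∑ x, P y x := by rw [Finset.sum_comm]; simp [Finset.mul_sum]
      _ = N t := by simp [hP_row, hN]
  have hNanti : ∀ {a b : ℕ}, a ≤ b → N b ≤ N a := by
    intro a b hab
    exact (antitone_nat_of_succ_le hNstep) hab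
  -- contraction constant
  set m : ℝ := (Fintype.card S : ℝ) with hm
  set c : ℝ := 1 - ρ * m with hc
  have hρm : ρ * m ≤ 1 := by
    have h1 : ∑ j : S, ρ ≤ ∑ j, (P ^ t₀) s j := Finset.sum_le_sum fun j _ => hDoeblin s j
    rw [hrow t₀ s] at h1
    simpa [hm, mul_comm] using h1
  have hcard : 0 < Fintype.card S := Fintype.card_pos_iff.mpr ⟨s⟩
  have hc0 : 0 ≤ c := by simp [hc]; linarith
  have hc1 : c < 1 := by
    have : 0 < ρ * m := mul_pos hρ (by positivity)
    simp [hc]; linarith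
  -- contraction in steps of t₀
  have hNcontr : ∀ t, N (t + t₀) ≤ c * N t := by
    intro t
    have key : ∀ x, |v (t + t₀) x| ≤ ∑ y, |v t y| * ((P ^ t₀) y x - ρ) := by
      intro x
      have : v (t + t₀) x = ∑ y, v t y * ((P ^ t₀) y x - ρ) := by
        rw [hvstep t t₀ x]
        simp [mul_sub, Finset.sum_sub_distrib, ← Finset.sum_mul, hvsum t]
      rw [this]
      refine (Finset.abs_sum_le_sum_abs _ _).trans ?_
      apply Finset.sum_le_sum
      intro y _
      rw [abs_mul, abs_of_nonneg (by linarith [hDoeblin y x] : (0:ℝ) ≤ (P ^ t₀) y x - ρ)]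
    calc N (t + t₀) ≤ ∑ x, ∑ y, |v t y| * ((P ^ t₀) y x - ρ) :=
          Finset.sum_le_sum fun x _ => key x
      _ = ∑ y, |v t y| * (∑ x, ((P ^ t₀) y x - ρ)) := by
          rw [Finset.sum_comm]
          exact Finset.sum_congr rfl fun y _ => (Finset.mul_sum _ _ _).symm
      _ = ∑ y, |v t y| * c := by
          refine Finset.sum_congr rfl fun y _ => ?_
          congr 1
          rw [Finset.sum_sub_distrib, hrow t₀ y, Finset.sum_const, Finset.card_univ,
            nsmul_eq_mul, hc, hm]
          ring
      _ = c * N t := by rw [← Finset.sum_mul, mul_comm]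
  -- N 0 ≤ 2
  have hN0 : N 0 ≤ 2 := by
    have : ∀ x, |v 0 x| ≤ |(1 : Matrix S S ℝ) s x| + |pinf x| := by
      intro x; simp only [hv, pow_zero]; exact abs_sub _ _
    calc N 0 ≤ ∑ x, (|(1 : Matrix S S ℝ) s x| + |pinf x|) :=
          Finset.sum_le_sum fun x _ => this x
      _ = (∑ x, |(1 : Matrix S S ℝ) s x|) + ∑ x, |pinf x| := Finset.sum_add_distrib
      _ = 1 + 1 := by
          congr 1
          · simp [Matrix.one_apply, apply_ite abs]
          · simp only [abs_of_nonneg (hpinf_nonneg _)]; exact hpinf_sum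
      _ = 2 := by norm_num
  -- geometric bound
  have hgeom : ∀ k, N (k * t₀) ≤ 2 * c ^ k := by
    intro k
    induction k with
    | zero => simpa using hN0
    | succ k ih =>
      have : N ((k + 1) * t₀) ≤ c * N (k * t₀) := by
        have : (k + 1) * t₀ = k * t₀ + t₀ := by ring
        rw [this]; exact hNcontr _
      calc N ((k + 1) * t₀) ≤ c * N (k * t₀) := this
        _ ≤ c * (2 * c ^ k) := mul_le_mul_of_nonneg_left ih hc0
        _ = 2 * c ^ (k + 1) := by ring
  have hNbound : ∀ t, N t ≤ 2 * c ^ (t / t₀) := by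
    intro t
    have h1 : (t / t₀) * t₀ ≤ t := Nat.div_mul_le_self t t₀
    exact (hNanti h1).trans (hgeom _)
  -- N → 0
  have hNtend : Tendsto N atTop (nhds 0) := by
    have hpow : Tendsto (fun k : ℕ => c ^ k) atTop (nhds 0) :=
      tendsto_pow_atTop_nhds_zero_of_lt_one hc0 hc1
    have hdiv : Tendsto (fun t : ℕ => t / t₀) atTop atTop :=
      Filter.tendsto_atTop_atTop.mpr fun b =>
        ⟨b * t₀, fun a ha => (Nat.le_div_iff_mul_le ht₀).mpr ha⟩
    have h2 : Tendsto (fun t : ℕ => 2 * c ^ (t / t₀)) atTop (nhds 0) := by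
      have := (hpow.comp hdiv).const_mul (2 : ℝ)
      simpa using this
    exact squeeze_zero hNnonneg hNbound h2
  -- expected reward converges
  set M : ℝ := ∑ x, |r x| with hM
  have hMnonneg : 0 ≤ M := Finset.sum_nonneg fun x _ => abs_nonneg _
  have herr : ∀ t, |(∑ x, (P ^ t) s x * r x) - ∑ x, pinf x * r x| ≤ N t * M := by
    intro t
    have : (∑ x, (P ^ t) s x * r x) - ∑ x, pinf x * r x = ∑ x, v t x * r x := by
      simp [hv, sub_mul, Finset.sum_sub_distrib]
    rw [this]
    calc |∑ x, v t x * r x| ≤ ∑ x, |v t x * r x| := Finset.abs_sum_le_sum_abs _ _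
      _ ≤ ∑ x, N t * |r x| := by
          apply Finset.sum_le_sum
          intro x _
          rw [abs_mul]
          apply mul_le_mul_of_nonneg_right _ (abs_nonneg _)
          exact Finset.single_le_sum (f := fun y => |v t y|)
            (fun y _ => abs_nonneg _) (Finset.mem_univ x)
      _ = N t * M := by rw [← Finset.mul_sum]
  have hatend : Tendsto (fun t : ℕ => ∑ x, (P ^ t) s x * r x) atTop
      (nhds (∑ x, pinf x * r x)) := by
    have hNM : Tendsto (fun t => N t * M) atTop (nhds 0) := by
      simpa using hNtend.mul_const M
    have := squeeze_zero_norm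
      (f := fun t => (∑ x, (P ^ t) s x * r x) - ∑ x, pinf x * r x)
      (fun t => by simpa [Real.norm_eq_abs] using herr t) hNM
    have h' := this.add_const (∑ x, pinf x * r x)
    simpa using h'
  -- Cesàro averaging
  have hshift : Tendsto (fun i : ℕ => ∑ x, (P ^ (1 + i)) s x * r x) atTop
      (nhds (∑ x, pinf x * r x)) := by
    have := hatend.comp (tendsto_add_atTop_nat 1)
    simpa [Function.comp_def, add_comm] using this
  have := hshift.cesaro
  refine this.congr fun T => ?_
  rw [← Finset.Ico_add_one_right_eq_Icc, Finset.sum_Ico_eq_sum_range]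
  simp [one_div]
end

section
/- Suppose a learning procedure proceeds in episodes where a new episode begins each time the number of visits to some state-action pair (s,a) doubles (episode k ends at time t when the within-episode count n_k(s_t,a_t) reaches the count N_{τ_k}(s_t,a_t) accumulated before the episode). Then the total number K of episodes in T time steps satisfies K ≤ S·A·log₂(8T/(S·A)), where S = |S| and A = |A|, provided T ≥ S·A. -/
open BigOperators

/-- Bound on the number of episodes under the doubling schedule: if `K sa`
counts the episodes triggered by the pair `sa`, each such episode at least
doubles the visit count of `sa` (so `N sa ≥ 2 ^ (K sa − 1)` whenever
`K sa ≥ 1`), total visits sum to `T`, and `T ≥ S·A`, then the total number of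
episodes `Ktot = ∑ sa, K sa` satisfies `Ktot ≤ S·A·log₂(8T/(S·A))`. -/
theorem episode_count_bound
    {S A : Type*} [Fintype S] [Fintype A] [Nonempty S] [Nonempty A]
    (T : ℕ) (K N : S × A → ℕ) (Ktot : ℕ)
    (hKtot : Ktot = ∑ sa : S × A, K sa)
    (hdouble : ∀ sa : S × A, 1 ≤ K sa → (2 : ℝ) ^ (K sa - 1) ≤ (N sa : ℝ))
    (hvisits : ∑ sa : S × A, N sa = T)
    (hT : Fintype.card S * Fintype.card A ≤ T) :
    (Ktot : ℝ) ≤ (Fintype.card S : ℝ) * (Fintype.card A) *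
      Real.logb 2 (8 * T / ((Fintype.card S : ℝ) * (Fintype.card A))) := by
  classical
  set c : ℝ := (Fintype.card S : ℝ) * (Fintype.card A) with hc
  have hcard : (Fintype.card (S × A) : ℝ) = c := by
    rw [hc, Fintype.card_prod]; push_cast; ring
  have hcpos : (0 : ℝ) < c := by
    rw [← hcard]
    exact_mod_cast Fintype.card_pos
  have hcT : c ≤ (T : ℝ) := by
    rw [hc]; exact_mod_cast hT
  have hTpos : (0 : ℝ) < T := lt_of_lt_of_le hcpos hcT
  set m : S × A → ℝ := fun sa => max (N sa : ℝ) 1 with hm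
  have hm1 : ∀ sa, (1 : ℝ) ≤ m sa := fun sa => le_max_right _ _
  have hmpos : ∀ sa, (0 : ℝ) < m sa := fun sa => lt_of_lt_of_le one_pos (hm1 sa)
  -- Step 1: K sa ≤ 1 + logb 2 (m sa)
  have hstep1 : ∀ sa, (K sa : ℝ) ≤ 1 + Real.logb 2 (m sa) := by
    intro sa
    rcases Nat.eq_zero_or_pos (K sa) with h0 | h1
    · rw [h0]
      have : (0 : ℝ) ≤ Real.logb 2 (m sa) :=
        Real.logb_nonneg one_lt_two (hm1 sa)
      push_cast; linarith
    · have hd : (2 : ℝ) ^ (K sa - 1) ≤ m sa :=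
        le_trans (hdouble sa h1) (le_max_left _ _)
      have hlog : Real.logb 2 ((2 : ℝ) ^ (K sa - 1)) ≤ Real.logb 2 (m sa) :=
        Real.logb_le_logb_of_le (by norm_num) (by positivity) hd
      rw [Real.logb_pow, Real.logb_self_eq_one (by norm_num : (1:ℝ) < 2), mul_one] at hlog
      have : ((K sa - 1 : ℕ) : ℝ) = (K sa : ℝ) - 1 := by
        rw [Nat.cast_sub h1]; norm_num
      rw [this] at hlog
      linarith [hlog]
  -- Step 2: sum of m's is at most 2T
  have hsum_m : ∑ sa : S × A, m sa ≤ 2 * T := by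
    have h1 : ∑ sa : S × A, m sa ≤ ∑ sa : S × A, ((N sa : ℝ) + 1) := by
      apply Finset.sum_le_sum
      intro sa _
      have h0 : (0:ℝ) ≤ (N sa : ℝ) := Nat.cast_nonneg _
      exact max_le (by linarith) (by linarith)
    have h2 : ∑ sa : S × A, ((N sa : ℝ) + 1) = (T : ℝ) + c := by
      rw [Finset.sum_add_distrib, Finset.sum_const, Finset.card_univ, nsmul_eq_mul, mul_one,
        hcard]
      have : ∑ sa : S × A, (N sa : ℝ) = (T : ℝ) := by
        exact_mod_cast congrArg (Nat.cast (R := ℝ)) hvisits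
      rw [this]
    linarith
  -- Step 3: Jensen for log
  have hjensen : ∑ sa : S × A, (1 / c) * Real.log (m sa) ≤
      Real.log (∑ sa : S × A, (1 / c) * m sa) := by
    have := (strictConcaveOn_log_Ioi.concaveOn).le_map_sum
      (t := (Finset.univ : Finset (S × A))) (w := fun _ => 1 / c) (p := m)
      (fun _ _ => by positivity)
      (by rw [Finset.sum_const, Finset.card_univ, nsmul_eq_mul, hcard]
          field_simp)
      (fun sa _ => Set.mem_Ioi.mpr (hmpos sa))
    simpa [smul_eq_mul] using this
  have hsum_avg : ∑ sa : S × A, (1 / c) * m sa = (∑ sa : S × A, m sa) / c := by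
    rw [← Finset.mul_sum]; ring
  have havg_le : Real.log (∑ sa : S × A, (1 / c) * m sa) ≤ Real.log (2 * T / c) := by
    apply Real.log_le_log
    · rw [hsum_avg]
      apply div_pos _ hcpos
      calc (0:ℝ) < c := hcpos
        _ = ∑ sa : S × A, (1:ℝ) := by
            rw [Finset.sum_const, Finset.card_univ, nsmul_eq_mul, mul_one, hcard]
        _ ≤ ∑ sa : S × A, m sa := Finset.sum_le_sum fun sa _ => hm1 sa
    · rw [hsum_avg]
      gcongr
  -- convert to logb
  have hlog2pos : (0 : ℝ) < Real.log 2 := Real.log_pos one_lt_two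
  have hsum_logb : ∑ sa : S × A, Real.logb 2 (m sa) ≤ c * Real.logb 2 (2 * T / c) := by
    have h := le_trans hjensen havg_le
    rw [← Finset.mul_sum] at h
    have h' : ∑ sa : S × A, Real.log (m sa) ≤ c * Real.log (2 * T / c) := by
      have := mul_le_mul_of_nonneg_left h (le_of_lt hcpos)
      rw [← mul_assoc, mul_one_div, div_self (ne_of_gt hcpos), one_mul] at this
      exact this
    unfold Real.logb
    rw [← Finset.sum_div]
    rw [div_le_iff₀ hlog2pos]
    calc (∑ sa : S × A, Real.log (m sa)) ≤ c * Real.log (2 * T / c) := h'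
      _ = c * (Real.log (2 * T / c) / Real.log 2) * Real.log 2 := by
          field_simp
  -- combine
  have hK : (Ktot : ℝ) ≤ c + c * Real.logb 2 (2 * T / c) := by
    rw [hKtot]
    push_cast
    calc ∑ sa : S × A, (K sa : ℝ) ≤ ∑ sa : S × A, (1 + Real.logb 2 (m sa)) :=
          Finset.sum_le_sum fun sa _ => hstep1 sa
      _ = c + ∑ sa : S × A, Real.logb 2 (m sa) := by
          rw [Finset.sum_add_distrib, Finset.sum_const, Finset.card_univ, nsmul_eq_mul, mul_one,
            hcard]
      _ ≤ c + c * Real.logb 2 (2 * T / c) := by linarith [hsum_logb]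
  have h2Tc : (0:ℝ) < 2 * T / c := by positivity
  have hfinal : c + c * Real.logb 2 (2 * T / c) = c * Real.logb 2 (4 * T / c) := by
    have : (4 : ℝ) * T / c = 2 * (2 * T / c) := by ring
    rw [this, Real.logb_mul (by norm_num) (ne_of_gt h2Tc),
      Real.logb_self_eq_one (by norm_num : (1:ℝ) < 2)]
    ring
  have hmono : Real.logb 2 (4 * T / c) ≤ Real.logb 2 (8 * T / c) := by
    apply Real.logb_le_logb_of_le (by norm_num) (by positivity)
    gcongr
    linarith
  calc (Ktot : ℝ) ≤ c * Real.logb 2 (4 * T / c) := by rw [← hfinal]; exact hK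
    _ ≤ c * Real.logb 2 (8 * T / c) := by
        exact mul_le_mul_of_nonneg_left hmono (le_of_lt hcpos)
end

section
/- Suppose there exists a feasible occupation measure μ_feas for the CMDP LP with Σ μ_feas(s,a) c_i(s,a) ≤ c_i^{ub} − ε − η for all i, for some η > 0 and ε > 0. Let λ* ≥ 0 be an optimal Lagrange multiplier for the LP with budgets ĉ where c_i^{ub} − ε ≤ ĉ_i ≤ c_i^{ub}. Then Σ_{i=1}^M λᵢ* ≤ (max_{(s,a)} r(s,a) − min_{(s,a)} r(s,a)) / η. -/
open BigOperators

/-- A vector `μ` on `S × A` satisfies the flow (stationarity) and simplex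
constraints of the occupation-measure LP. -/
def IsFlow {S A : Type*} [Fintype S] [Fintype A]
    (p : S → A → S → ℝ) (μ : S × A → ℝ) : Prop :=
  (∀ sa : S × A, 0 ≤ μ sa) ∧ (∑ sa : S × A, μ sa = 1) ∧
    (∀ s : S, ∑ a : A, μ (s, a) = ∑ sb : S × A, μ sb * p sb.1 sb.2 s)

/-- Bound on optimal Lagrange multipliers in terms of the feasibility slack:
if some occupation measure has all costs at most `c^{ub} − ε − η`, and `λ*` is
an optimal multiplier for the LP with budgets `ĉ ∈ [c^{ub} − ε, c^{ub}]`
(i.e. an optimal primal `μ*` maximizes the `λ*`-Lagrangian over the flow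
polytope, with zero duality gap), then
`∑ᵢ λᵢ* ≤ (max r − min r)/η`. -/
theorem lagrange_multiplier_bound
    {S A : Type*} [Fintype S] [Fintype A] [Nonempty S] [Nonempty A] (M : ℕ)
    (p : S → A → S → ℝ)
    (hp_nonneg : ∀ s a s', 0 ≤ p s a s') (hp_row : ∀ s a, ∑ s', p s a s' = 1)
    (r : S → A → ℝ) (c : Fin M → S → A → ℝ) (cub chat : Fin M → ℝ)
    (ε η : ℝ) (hε : 0 < ε) (hη : 0 < η)
    (hrange : ∀ i, cub i - ε ≤ chat i ∧ chat i ≤ cub i)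
    (μfeas : S × A → ℝ) (hfeas_flow : IsFlow p μfeas)
    (hfeas_slack : ∀ i, ∑ sa : S × A, μfeas sa * c i sa.1 sa.2 ≤ cub i - ε - η)
    (lamstar : Fin M → ℝ) (hlam_nonneg : ∀ i, 0 ≤ lamstar i)
    (μstar : S × A → ℝ) (hμstar_flow : IsFlow p μstar)
    (hμstar_feas : ∀ i, ∑ sa : S × A, μstar sa * c i sa.1 sa.2 ≤ chat i)
    -- zero duality gap / complementary slackness at the optimum:
    (hgap : (∑ sa : S × A, μstar sa * r sa.1 sa.2) =
      (∑ sa : S × A, μstar sa * r sa.1 sa.2) +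
        ∑ i, lamstar i * (chat i - ∑ sa : S × A, μstar sa * c i sa.1 sa.2))
    -- the optimal primal maximizes the Lagrangian over the flow polytope:
    (hmax : ∀ μ : S × A → ℝ, IsFlow p μ →
      (∑ sa : S × A, μ sa * r sa.1 sa.2) +
          ∑ i, lamstar i * (chat i - ∑ sa : S × A, μ sa * c i sa.1 sa.2) ≤
        (∑ sa : S × A, μstar sa * r sa.1 sa.2) +
          ∑ i, lamstar i * (chat i - ∑ sa : S × A, μstar sa * c i sa.1 sa.2)) :
    ∑ i, lamstar i ≤
      ((Finset.univ.sup' Finset.univ_nonempty (fun sa : S × A => r sa.1 sa.2)) -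
        (Finset.univ.inf' Finset.univ_nonempty (fun sa : S × A => r sa.1 sa.2))) / η := by

  set R := Finset.univ.sup' Finset.univ_nonempty (fun sa : S × A => r sa.1 sa.2) with hR
  set L := Finset.univ.inf' Finset.univ_nonempty (fun sa : S × A => r sa.1 sa.2) with hL
  have hf0 := hfeas_flow.1
  have hf1 := hfeas_flow.2.1
  have hs0 := hμstar_flow.1
  have hs1 := hμstar_flow.2.1
  have hzero : ∑ i, lamstar i * (chat i - ∑ sa : S × A, μstar sa * c i sa.1 sa.2) = 0 := by
    linarith [hgap]
  have hkey := hmax μfeas hfeas_flow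
  rw [hzero] at hkey
  -- each slack term at μfeas is ≥ η * lamstar i
  have hterm : ∀ i ∈ Finset.univ, lamstar i * η ≤
      lamstar i * (chat i - ∑ sa : S × A, μfeas sa * c i sa.1 sa.2) := by
    intro i _
    apply mul_le_mul_of_nonneg_left _ (hlam_nonneg i)
    have h1 := (hrange i).1
    have h2 := hfeas_slack i
    linarith
  have hsum : (∑ i, lamstar i) * η ≤
      ∑ i, lamstar i * (chat i - ∑ sa : S × A, μfeas sa * c i sa.1 sa.2) := by
    rw [Finset.sum_mul]
    exact Finset.sum_le_sum hterm
  have hub : ∑ sa : S × A, μstar sa * r sa.1 sa.2 ≤ R := by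
    calc ∑ sa : S × A, μstar sa * r sa.1 sa.2 ≤ ∑ sa : S × A, μstar sa * R := by
          apply Finset.sum_le_sum
          intro sa _
          exact mul_le_mul_of_nonneg_left (Finset.le_sup' (fun sa : S × A => r sa.1 sa.2) (Finset.mem_univ sa)) (hs0 sa)
      _ = R := by rw [← Finset.sum_mul, hs1, one_mul]
  have hlb : L ≤ ∑ sa : S × A, μfeas sa * r sa.1 sa.2 := by
    calc L = ∑ sa : S × A, μfeas sa * L := by rw [← Finset.sum_mul, hf1, one_mul]
      _ ≤ ∑ sa : S × A, μfeas sa * r sa.1 sa.2 := by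
          apply Finset.sum_le_sum
          intro sa _
          exact mul_le_mul_of_nonneg_left (Finset.inf'_le (fun sa : S × A => r sa.1 sa.2) (Finset.mem_univ sa)) (hf0 sa)
  rw [le_div_iff₀ hη]
  linarith
end

section
/- Combining the two sensitivity lemmas: under strict feasibility with slack η > 0 (there is an occupation measure with all costs at most c_i^{ub} − ε − η), for budgets ĉ with c_i^{ub} − ε ≤ ĉ_i ≤ c_i^{ub}, the optimal values satisfy r* − r*(ĉ) ≤ (max_i (c_i^{ub} − ĉ_i)) · η̂ / η, where η̂ = max_{(s,a)} r(s,a) − min_{(s,a)} r(s,a). -/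
open BigOperators

lemma flow_value_le_sup {S A : Type*} [Fintype S] [Fintype A] [Nonempty S] [Nonempty A]
    {p : S → A → S → ℝ} {μ : S × A → ℝ} (h : IsFlow p μ) (r : S → A → ℝ) :
    ∑ sa : S × A, μ sa * r sa.1 sa.2 ≤
      Finset.univ.sup' Finset.univ_nonempty (fun sa : S × A => r sa.1 sa.2) := by
  calc ∑ sa : S × A, μ sa * r sa.1 sa.2
      ≤ ∑ sa : S × A, μ sa *
          Finset.univ.sup' Finset.univ_nonempty (fun sa : S × A => r sa.1 sa.2) :=
        Finset.sum_le_sum (fun sa _ => mul_le_mul_of_nonneg_left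
          (Finset.le_sup' (fun sa : S × A => r sa.1 sa.2) (Finset.mem_univ sa)) (h.1 sa))
    _ = _ := by rw [← Finset.sum_mul, h.2.1, one_mul]

lemma flow_inf_le_value {S A : Type*} [Fintype S] [Fintype A] [Nonempty S] [Nonempty A]
    {p : S → A → S → ℝ} {μ : S × A → ℝ} (h : IsFlow p μ) (r : S → A → ℝ) :
    Finset.univ.inf' Finset.univ_nonempty (fun sa : S × A => r sa.1 sa.2) ≤
      ∑ sa : S × A, μ sa * r sa.1 sa.2 := by
  calc Finset.univ.inf' Finset.univ_nonempty (fun sa : S × A => r sa.1 sa.2)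
      = ∑ sa : S × A, μ sa *
          Finset.univ.inf' Finset.univ_nonempty (fun sa : S × A => r sa.1 sa.2) := by
        rw [← Finset.sum_mul, h.2.1, one_mul]
    _ ≤ ∑ sa : S × A, μ sa * r sa.1 sa.2 :=
        Finset.sum_le_sum (fun sa _ => mul_le_mul_of_nonneg_left
          (Finset.inf'_le (fun sa : S × A => r sa.1 sa.2) (Finset.mem_univ sa)) (h.1 sa))

/-- Combined sensitivity bound: under strict feasibility with slack `η > 0`
(some occupation measure has all costs at most `c^{ub} − ε − η`), for budgets
`ĉ` with `c^{ub} − ε ≤ ĉ ≤ c^{ub}`, the optimal LP values satisfy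
`r* − r*(ĉ) ≤ (maxᵢ (cᵢ^{ub} − ĉᵢ)) · η̂ / η` where
`η̂ = max r − min r`. -/
theorem cmdp_sensitivity_combined
    {S A : Type*} [Fintype S] [Fintype A] [Nonempty S] [Nonempty A]
    (M : ℕ) (hM : 0 < M)
    (p : S → A → S → ℝ)
    (hp_nonneg : ∀ s a s', 0 ≤ p s a s') (hp_row : ∀ s a, ∑ s', p s a s' = 1)
    (r : S → A → ℝ) (c : Fin M → S → A → ℝ) (cub chat : Fin M → ℝ)
    (ε η : ℝ) (hε : 0 < ε) (hη : 0 < η)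
    (hrange : ∀ i, cub i - ε ≤ chat i ∧ chat i ≤ cub i)
    (μfeas : S × A → ℝ) (hfeas_flow : IsFlow p μfeas)
    (hfeas_slack : ∀ i, ∑ sa : S × A, μfeas sa * c i sa.1 sa.2 ≤ cub i - ε - η)
    (rstar rstarhat : ℝ)
    (hrstar : IsGreatest
      {v : ℝ | ∃ μ : S × A → ℝ, IsFlow p μ ∧
        (∀ i, ∑ sa : S × A, μ sa * c i sa.1 sa.2 ≤ cub i) ∧
        v = ∑ sa : S × A, μ sa * r sa.1 sa.2} rstar)
    (hrstarhat : IsGreatest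
      {v : ℝ | ∃ μ : S × A → ℝ, IsFlow p μ ∧
        (∀ i, ∑ sa : S × A, μ sa * c i sa.1 sa.2 ≤ chat i) ∧
        v = ∑ sa : S × A, μ sa * r sa.1 sa.2} rstarhat) :
    rstar - rstarhat ≤
      (Finset.univ.sup' (Finset.univ_nonempty_iff.2 ⟨⟨0, hM⟩⟩)
          (fun i => cub i - chat i)) *
        (((Finset.univ.sup' Finset.univ_nonempty (fun sa : S × A => r sa.1 sa.2)) -
          (Finset.univ.inf' Finset.univ_nonempty (fun sa : S × A => r sa.1 sa.2))) / η) := by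
  obtain ⟨μs, hflow, hcost, hrval⟩ := hrstar.1
  set δ : ℝ := Finset.univ.sup' (Finset.univ_nonempty_iff.2 ⟨⟨0, hM⟩⟩)
      (fun i => cub i - chat i) with hδdef
  set R : ℝ := Finset.univ.sup' Finset.univ_nonempty (fun sa : S × A => r sa.1 sa.2) with hR
  set m : ℝ := Finset.univ.inf' Finset.univ_nonempty (fun sa : S × A => r sa.1 sa.2) with hm
  have hδ0 : 0 ≤ δ := by
    have h1 : cub ⟨0, hM⟩ - chat ⟨0, hM⟩ ≤ δ :=
      Finset.le_sup' (fun i => cub i - chat i) (Finset.mem_univ ⟨0, hM⟩)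
    have := (hrange ⟨0, hM⟩).2
    linarith
  have hδle : ∀ i, cub i - chat i ≤ δ := fun i => Finset.le_sup' (fun i => cub i - chat i) (Finset.mem_univ i)
  have hδε : δ ≤ ε := by
    apply Finset.sup'_le
    intro i _
    have := (hrange i).1
    linarith
  have hεη : (0:ℝ) < ε + η := by linarith
  set t : ℝ := δ / (ε + η) with htdef
  have ht0 : 0 ≤ t := div_nonneg hδ0 hεη.le
  have ht1 : t ≤ 1 := by
    rw [htdef, div_le_one hεη]; linarith
  have htεη : t * (ε + η) = δ := by
    rw [htdef]; field_simp
  -- the convex combination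
  set μt : S × A → ℝ := fun sa => (1 - t) * μs sa + t * μfeas sa with hμt
  have hsum : ∀ f : S × A → ℝ, ∑ sa : S × A, μt sa * f sa =
      (1 - t) * ∑ sa : S × A, μs sa * f sa + t * ∑ sa : S × A, μfeas sa * f sa := by
    intro f
    rw [Finset.mul_sum, Finset.mul_sum, ← Finset.sum_add_distrib]
    apply Finset.sum_congr rfl
    intro sa _
    simp only [hμt]; ring
  have hflowt : IsFlow p μt := by
    refine ⟨fun sa => add_nonneg (mul_nonneg (by linarith) (hflow.1 sa))
      (mul_nonneg ht0 (hfeas_flow.1 sa)), ?_, ?_⟩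
    · have h1 := hsum (fun _ => 1)
      simp only [mul_one] at h1
      rw [h1, hflow.2.1, hfeas_flow.2.1]; ring
    · intro s
      have h1 : ∑ a : A, μt (s, a) =
          (1 - t) * ∑ a : A, μs (s, a) + t * ∑ a : A, μfeas (s, a) := by
        rw [Finset.mul_sum, Finset.mul_sum, ← Finset.sum_add_distrib]
      rw [h1, hflow.2.2 s, hfeas_flow.2.2 s]
      rw [Finset.mul_sum, Finset.mul_sum, ← Finset.sum_add_distrib]
      apply Finset.sum_congr rfl
      intro sb _
      simp only [hμt]; ring
  have hcostt : ∀ i, ∑ sa : S × A, μt sa * c i sa.1 sa.2 ≤ chat i := by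
    intro i
    rw [hsum]
    have h1 := hcost i
    have h2 := hfeas_slack i
    have h3 : (1 - t) * ∑ sa : S × A, μs sa * c i sa.1 sa.2 +
        t * ∑ sa : S × A, μfeas sa * c i sa.1 sa.2 ≤
        (1 - t) * cub i + t * (cub i - ε - η) := by
      have := mul_le_mul_of_nonneg_left h1 (by linarith : (0:ℝ) ≤ 1 - t)
      have := mul_le_mul_of_nonneg_left h2 ht0
      linarith
    have h4 : (1 - t) * cub i + t * (cub i - ε - η) = cub i - t * (ε + η) := by ring
    have := hδle i
    rw [h4, htεη] at h3
    linarith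
  have hval : (1 - t) * rstar + t * ∑ sa : S × A, μfeas sa * r sa.1 sa.2 ≤ rstarhat := by
    apply hrstarhat.2
    exact ⟨μt, hflowt, hcostt, by rw [hsum, hrval]⟩
  have hrstarR : rstar ≤ R := by rw [hrval]; exact flow_value_le_sup hflow r
  have hYm : m ≤ ∑ sa : S × A, μfeas sa * r sa.1 sa.2 := flow_inf_le_value hfeas_flow r
  have hRm : m ≤ R := by
    rw [hm, hR]
    exact le_trans
      (Finset.inf'_le (fun sa : S × A => r sa.1 sa.2)
        (Finset.mem_univ (Classical.arbitrary (S × A))))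
      (Finset.le_sup' (fun sa : S × A => r sa.1 sa.2)
        (Finset.mem_univ (Classical.arbitrary (S × A))))
  have key : rstar - rstarhat ≤ t * (R - m) := by
    have h1 : rstar - rstarhat ≤ t * (rstar - ∑ sa : S × A, μfeas sa * r sa.1 sa.2) := by
      nlinarith [hval]
    have h2 : t * (rstar - ∑ sa : S × A, μfeas sa * r sa.1 sa.2) ≤ t * (R - m) := by
      apply mul_le_mul_of_nonneg_left _ ht0
      linarith
    linarith
  have final : t * (R - m) ≤ δ * ((R - m) / η) := by
    calc t * (R - m) = δ * (R - m) / (ε + η) := by rw [htdef]; ring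
      _ ≤ δ * (R - m) / η :=
          div_le_div_of_nonneg_left (mul_nonneg hδ0 (by linarith)) hη (by linarith)
      _ = δ * ((R - m) / η) := mul_div_assoc _ _ _
  linarith
end
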